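/- The discrete interacting mirror descent update z_{k+1}^i = z_k^i - ∇f(x_k^i) + Σ_j A_{ij}(z_k^j - z_k^i), x_{k+1}^i = ∇Φ*(z_{k+1}^i), with A doubly stochastic, is equivalent to the Bregman-proximal update x_{k+1}^i = argmin_{x∈X} { ∇f(x_k^i)ᵀx + Σ_j A_{ij} D_Φ(x, x_k^j) }. -/

import Mathlib

open MeasureTheory

/-- The discrete interacting mirror descent update
`z_{k+1}^i = z_k^i - ∇f(x_k^i) + Σ_j A_{ij}(z_k^j - z_k^i)`, `x_{k+1}^i = ∇Φ*(z_{k+1}^i)`,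
with `A` doubly stochastic, is equivalent to the Bregman-proximal update
`x_{k+1}^i = argmin_{x ∈ X} { ⟨∇f(x_k^i), x⟩ + Σ_j A_{ij} D_Φ(x, x_k^j) }`. -/
theorem ismd_interacting_md_bregman_proximal
    (d N : ℕ)
    (f Φ : EuclideanSpace ℝ (Fin d) → ℝ)
    (f' gΦ gΦstar : EuclideanSpace ℝ (Fin d) → EuclideanSpace ℝ (Fin d))
    (X : Set (EuclideanSpace ℝ (Fin d)))
    (A : Matrix (Fin N) (Fin N) ℝ)
    (hA0 : ∀ i j, 0 ≤ A i j)
    (hArow : ∀ i, ∑ j, A i j = 1)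
    (hAcol : ∀ j, ∑ i, A i j = 1)
    -- mirror map identities: ∇Φ ∘ ∇Φ* = id, ∇Φ*(ℝ^d) ⊆ X,
    -- and ∇Φ*(w) = argmin_{x∈X} (Φ(x) - ⟨w, x⟩)
    (hinv : ∀ w, gΦ (gΦstar w) = w)
    (hrange : ∀ w, gΦstar w ∈ X)
    (hargmin : ∀ w, ∀ y ∈ X,
      Φ (gΦstar w) - (inner ℝ w (gΦstar w) : ℝ) ≤ Φ y - (inner ℝ w y : ℝ))
    (zk zk1 xk xk1 : Fin N → EuclideanSpace ℝ (Fin d))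
    (hxk : ∀ i, xk i = gΦstar (zk i))
    -- the interacting mirror descent update (σ = 0, ε = 1)
    (hupd : ∀ i, zk1 i = zk i - f' (xk i) + ∑ j, A i j • (zk j - zk i))
    (hxk1 : ∀ i, xk1 i = gΦstar (zk1 i))
    (i : Fin N) :
    xk1 i ∈ X ∧ ∀ y ∈ X,
      (inner ℝ (f' (xk i)) (xk1 i) : ℝ)
          + ∑ j, A i j * (Φ (xk1 i) - Φ (xk j) - (inner ℝ (gΦ (xk j)) (xk1 i - xk j) : ℝ))
        ≤ (inner ℝ (f' (xk i)) y : ℝ)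
          + ∑ j, A i j * (Φ y - Φ (xk j) - (inner ℝ (gΦ (xk j)) (y - xk j) : ℝ)) := by

  have hz : ∀ j, gΦ (xk j) = zk j := fun j => by rw [hxk j, hinv]
  have hw : zk1 i = (∑ j, A i j • zk j) - f' (xk i) := by
    rw [hupd i]
    have h1 : ∑ j, A i j • (zk j - zk i) = (∑ j, A i j • zk j) - zk i := by
      simp only [smul_sub, Finset.sum_sub_distrib, ← Finset.sum_smul, hArow i, one_smul]
    rw [h1]; abel
  have key : ∀ y : EuclideanSpace ℝ (Fin d),
      (inner ℝ (f' (xk i)) y : ℝ)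
        + ∑ j, A i j * (Φ y - Φ (xk j) - (inner ℝ (gΦ (xk j)) (y - xk j) : ℝ))
      = Φ y - (inner ℝ (zk1 i) y : ℝ)
        + ∑ j, A i j * ((inner ℝ (zk j) (xk j) : ℝ) - Φ (xk j)) := by
    intro y
    have h1 : (inner ℝ (zk1 i) y : ℝ)
        = (∑ j, A i j * (inner ℝ (zk j) y : ℝ)) - (inner ℝ (f' (xk i)) y : ℝ) := by
      rw [hw, inner_sub_left, sum_inner]
      simp only [real_inner_smul_left]
    simp only [hz, inner_sub_right, h1]
    have h2 : ∀ j ∈ Finset.univ, A i j * (Φ y - Φ (xk j) - ((inner ℝ (zk j) y : ℝ) - (inner ℝ (zk j) (xk j) : ℝ)))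
        = A i j * Φ y - A i j * (inner ℝ (zk j) y : ℝ) + A i j * ((inner ℝ (zk j) (xk j) : ℝ) - Φ (xk j)) := by
      intro j _; ring
    rw [Finset.sum_congr rfl h2]
    simp only [Finset.sum_add_distrib, Finset.sum_sub_distrib, ← Finset.sum_mul, ← Finset.mul_sum,
      hArow i, one_mul]
    ring
  refine ⟨hxk1 i ▸ hrange _, fun y hy => ?_⟩
  rw [key (xk1 i), key y]
  have := hargmin (zk1 i) y hy
  rw [← hxk1 i] at this
  linarith
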